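/- Let n ≥ 1 and 0 ≤ i ≤ j ≤ n be integers, and let L_i(j) denote the coefficient of x^{j−i} in the polynomial q_j(x). If i is odd, then L_i(j) = 0. If i is even, then L_i(j) = ((−1)^{i/2}/j!) · Σ_{I ∈ 𝓘(i/2, j)} ∏_{u ∈ I} (n−u)(u+1), where 𝓘(k, j) denotes the collection of all k-element subsets I of {0, 1, …, j−2} such that any two distinct elements of I differ by at least 2, and the empty product equals 1. -/

import Mathlib

open Finset Polynomial

private def gp (k m : ℕ) : Finset (Finset ℕ) :=
  (Finset.range m).powerset.filter
    (fun I => I.card = k ∧ ∀ u ∈ I, ∀ w ∈ I, u < w → u + 2 ≤ w)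

private def S (n k m : ℕ) : ℚ :=
  ∑ I ∈ gp k m, ∏ u ∈ I, (((n : ℚ) - (u : ℚ)) * ((u : ℚ) + 1))

private lemma gp_zero (m : ℕ) : gp 0 m = {∅} := by
  ext I
  simp only [gp, mem_filter, mem_powerset, Finset.card_eq_zero, mem_singleton]
  constructor
  · rintro ⟨-, h, -⟩; exact h
  · rintro rfl; simp

private lemma S_zero (n m : ℕ) : S n 0 m = 1 := by
  simp [S, gp_zero]

private lemma gp_filter_not (k m : ℕ) :
    (gp k (m+1)).filter (fun I => m ∉ I) = gp k m := by
  ext I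
  simp only [gp, mem_filter, mem_powerset, gp]
  constructor
  · rintro ⟨⟨hsub, hc, hg⟩, hm⟩
    refine ⟨fun x hx => ?_, hc, hg⟩
    have h1 := mem_range.1 (hsub hx)
    have : x ≠ m := fun h => hm (h ▸ hx)
    exact mem_range.2 (by omega)
  · rintro ⟨hsub, hc, hg⟩
    have hm : m ∉ I := fun h => absurd (mem_range.1 (hsub h)) (lt_irrefl m)
    refine ⟨⟨fun x hx => ?_, hc, hg⟩, hm⟩
    exact mem_range.2 (by have := mem_range.1 (hsub hx); omega)

private lemma gp_filter_mem (k m : ℕ) (hk : 1 ≤ k) :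
    (gp k (m+1)).filter (fun I => m ∈ I) = (gp (k-1) (m-1)).image (insert m) := by
  ext I
  simp only [gp, mem_filter, mem_powerset, mem_image]
  constructor
  · rintro ⟨⟨hsub, hc, hg⟩, hm⟩
    refine ⟨I.erase m, ⟨fun x hx => ?_, ?_, ?_⟩, Finset.insert_erase hm⟩
    · have hxI := Finset.mem_of_mem_erase hx
      have hxm := Finset.ne_of_mem_erase hx
      have h1 := mem_range.1 (hsub hxI)
      have h2 := hg x hxI m hm (by omega)
      exact mem_range.2 (by omega)
    · rw [Finset.card_erase_of_mem hm, hc]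
    · intro u hu w hw huw
      exact hg u (Finset.mem_of_mem_erase hu) w (Finset.mem_of_mem_erase hw) huw
  · rintro ⟨J, ⟨hsub, hc, hg⟩, rfl⟩
    have hJm : m ∉ J := fun h => by have := mem_range.1 (hsub h); omega
    have hmem : ∀ x ∈ J, x < m - 1 := fun x hx => mem_range.1 (hsub hx)
    refine ⟨⟨fun x hx => ?_, ?_, ?_⟩, Finset.mem_insert_self m J⟩
    · rcases Finset.mem_insert.1 hx with rfl | hx
      · exact mem_range.2 (by omega)
      · exact mem_range.2 (by have := hmem x hx; omega)
    · rw [Finset.card_insert_of_notMem hJm, hc]; omega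
    · intro u hu w hw huw
      rcases Finset.mem_insert.1 hu with hum | huJ
      · rcases Finset.mem_insert.1 hw with hwm | hwJ
        · omega
        · have := hmem w hwJ; omega
      · rcases Finset.mem_insert.1 hw with hwm | hwJ
        · have := hmem u huJ; omega
        · exact hg u huJ w hwJ huw

private lemma S_succ (n k m : ℕ) (hk : 1 ≤ k) :
    S n k (m+1) = S n k m + ((n:ℚ) - (m:ℚ)) * ((m:ℚ)+1) * S n (k-1) (m-1) := by
  classical
  have hsplit := Finset.sum_filter_add_sum_filter_not (gp k (m+1)) (fun I => m ∈ I)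
    (fun I => ∏ u ∈ I, (((n : ℚ) - (u : ℚ)) * ((u : ℚ) + 1)))
  rw [S, ← hsplit, gp_filter_not, gp_filter_mem k m hk]
  rw [Finset.sum_image (by
    intro I hI J hJ h
    simp only [gp, Finset.mem_coe, mem_filter, mem_powerset] at hI hJ
    have hIm : m ∉ I := fun hx => by have := mem_range.1 (hI.1 hx); omega
    have hJm : m ∉ J := fun hx => by have := mem_range.1 (hJ.1 hx); omega
    rw [← Finset.erase_insert hIm, ← Finset.erase_insert hJm, h])]
  have hterm : ∀ I ∈ gp (k-1) (m-1),
      ∏ u ∈ insert m I, (((n : ℚ) - (u : ℚ)) * ((u : ℚ) + 1)) =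
      (((n:ℚ) - (m:ℚ)) * ((m:ℚ)+1)) * ∏ u ∈ I, (((n : ℚ) - (u : ℚ)) * ((u : ℚ) + 1)) := by
    intro I hI
    simp only [gp, mem_filter, mem_powerset] at hI
    have hIm : m ∉ I := fun hx => by have := mem_range.1 (hI.1 hx); omega
    rw [Finset.prod_insert hIm]
  rw [Finset.sum_congr rfl hterm, ← Finset.mul_sum, ← S, ← S]
  ring

private lemma S_vanish (n : ℕ) : ∀ m k, m + 1 < 2*k → S n k m = 0 := by
  intro m
  induction m using Nat.strong_induction_on with
  | _ m ih =>
    intro k hk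
    match m with
    | 0 =>
      have hk1 : 1 ≤ k := by omega
      rw [S]
      have : gp k 0 = ∅ := by
        ext I
        simp only [gp, mem_filter, mem_powerset, Finset.notMem_empty, iff_false]
        rintro ⟨hsub, hc, -⟩
        have : I = ∅ := Finset.subset_empty.1 (by simpa using hsub)
        subst this; simp at hc; omega
      simp [this]
    | (m+1) =>
      have hk1 : 1 ≤ k := by omega
      rw [S_succ n k m hk1, ih m (by omega) k (by omega),
        ih (m-1) (by omega) (k-1) (by omega)]
      ring

/-- coefficients of the polynomials `q j` defined by the
three-term recursion coming from the Hamming graph `H(n,1)`. -/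
theorem coeff_q_eq (n : ℕ) (hn : 1 ≤ n) (q : ℕ → Polynomial ℚ)
    (hq0 : q 0 = 1) (hq1 : q 1 = Polynomial.X)
    (hrec : ∀ j : ℕ, 1 ≤ j → j ≤ n - 1 →
      Polynomial.X * q j =
        Polynomial.C ((j : ℚ) + 1) * q (j + 1) +
        Polynomial.C ((n : ℚ) - (j : ℚ) + 1) * q (j - 1))
    (i j : ℕ) (hij : i ≤ j) (hjn : j ≤ n) :
    (Odd i → (q j).coeff (j - i) = 0) ∧
    (Even i → (q j).coeff (j - i) =
      (-1 : ℚ) ^ (i / 2) / (j.factorial : ℚ) *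
        ∑ I ∈ (Finset.range (j - 1)).powerset.filter
            (fun I => I.card = i / 2 ∧ ∀ u ∈ I, ∀ w ∈ I, u < w → u + 2 ≤ w),
          ∏ u ∈ I, (((n : ℚ) - (u : ℚ)) * ((u : ℚ) + 1))) := by
  have key : ∀ j, j ≤ n →
      (∀ m, j < m → (q j).coeff m = 0) ∧
      (∀ i, i ≤ j →
        ((Odd i → (q j).coeff (j - i) = 0) ∧
         (Even i → (q j).coeff (j - i) =
           (-1 : ℚ) ^ (i / 2) / (j.factorial : ℚ) * S n (i / 2) (j - 1)))) := by
    intro j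
    induction j using Nat.strong_induction_on with
    | _ j ih =>
      rcases j with _ | _ | j
      · intro _
        constructor
        · intro m hm
          rw [hq0, Polynomial.coeff_one, if_neg (by omega)]
        · intro i hi
          have hi0 : i = 0 := by omega
          subst hi0
          constructor
          · intro hodd; exact absurd hodd (by decide)
          · intro _
            rw [hq0]
            simp [Polynomial.coeff_one, S_zero]
      · intro _
        constructor
        · intro m hm
          rw [hq1, Polynomial.coeff_X, if_neg (by omega)]
        · intro i hi
          interval_cases i
          · constructor
            · intro hodd; exact absurd hodd (by decide)
            · intro _
              rw [hq1]
              simp [Polynomial.coeff_X_one, S_zero]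
          · constructor
            · intro _
              rw [hq1]
              simp
            · intro heven; exact absurd heven (by decide)
      · intro hjn
        simp only [show j+1+1 = j+2 from rfl] at *
        have ih1 := ih (j+1) (by omega) (by omega)
        have ih0 := ih j (by omega) (by omega)
        have hfact1 : ((j+1).factorial : ℚ) = ((j:ℚ)+1) * (j.factorial : ℚ) := by
          rw [Nat.factorial_succ]; push_cast; ring
        have hfact2 : ((j+2).factorial : ℚ) = ((j:ℚ)+2) * ((j+1).factorial : ℚ) := by
          rw [show j+2 = (j+1)+1 from rfl, Nat.factorial_succ]; push_cast; ring
        have hfne : (j.factorial : ℚ) ≠ 0 := by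
          exact_mod_cast Nat.factorial_ne_zero j
        have hco : ∀ m : ℕ, (q (j+2)).coeff m =
            ((Polynomial.X * q (j+1)).coeff m - ((n:ℚ) - (j:ℚ)) * (q j).coeff m)
              / ((j:ℚ)+2) := by
          intro m
          have h := hrec (j+1) (by omega) (by omega)
          have h2 := congrArg (fun p => p.coeff m) h
          simp only [Polynomial.coeff_add, Polynomial.coeff_C_mul,
            Nat.add_sub_cancel, show j+1+1 = j+2 from rfl] at h2
          push_cast at h2
          rw [h2]
          have hne : ((j:ℚ)+2) ≠ 0 := by positivity
          field_simp
          ring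
        constructor
        · intro m hm
          rw [hco m]
          obtain ⟨m', rfl⟩ : ∃ m', m = m'+1 := ⟨m-1, by omega⟩
          rw [Polynomial.coeff_X_mul, ih1.1 m' (by omega), ih0.1 (m'+1) (by omega)]
          simp
        · intro i hi
          simp only [show j+2-1 = j+1 from by omega]
          constructor
          · intro hodd
            rw [hco]
            have hA : (Polynomial.X * q (j+1)).coeff (j+2-i) = 0 := by
              rcases Nat.lt_or_ge (j+1) i with h | h
              · rw [show j+2-i = 0 from by omega, Polynomial.mul_coeff_zero,
                  Polynomial.coeff_X_zero, zero_mul]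
              · rw [show j+2-i = (j+1-i)+1 from by omega, Polynomial.coeff_X_mul]
                exact ((ih1.2 i h).1 hodd)
            have hB : (q j).coeff (j+2-i) = 0 := by
              by_cases h1 : i = 1
              · subst h1
                rw [show j+2-1 = j+1 from by omega]
                exact ih0.1 (j+1) (by omega)
              · have h3 : 3 ≤ i := by rcases hodd with ⟨c, hc⟩; omega
                rw [show j+2-i = j-(i-2) from by omega]
                exact (ih0.2 (i-2) (by omega)).1
                  (by rcases hodd with ⟨c, hc⟩; exact ⟨c-1, by omega⟩)
            rw [hA, hB]
            simp
          · intro heven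
            by_cases h0 : i = 0
            · subst h0
              simp only [Nat.sub_zero, Nat.zero_div, pow_zero]
              rw [hco]
              rw [show j+2 = (j+1)+1 from rfl, Polynomial.coeff_X_mul]
              have hA := (ih1.2 0 (by omega)).2 Even.zero
              simp only [Nat.add_sub_cancel, Nat.sub_zero, Nat.zero_div, pow_zero] at hA
              rw [hA, ih0.1 ((j+1)+1) (by omega), S_zero, S_zero, hfact2, hfact1]
              have hne : ((j:ℚ)+2) ≠ 0 := by positivity
              have hne1 : ((j:ℚ)+1) ≠ 0 := by positivity
              field_simp
              ring
            · have hi2 : i % 2 = 0 := Nat.even_iff.1 heven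
              have hk : 1 ≤ i/2 := by omega
              rw [hco]
              have hA : (Polynomial.X * q (j+1)).coeff (j+2-i) =
                  (-1:ℚ)^(i/2) / ((j+1).factorial : ℚ) * S n (i/2) j := by
                rcases Nat.lt_or_ge (j+1) i with h | h
                · rw [show j+2-i = 0 from by omega, Polynomial.mul_coeff_zero,
                    Polynomial.coeff_X_zero, zero_mul,
                    S_vanish n j (i/2) (by omega)]
                  ring
                · rw [show j+2-i = (j+1-i)+1 from by omega, Polynomial.coeff_X_mul]
                  have := (ih1.2 i h).2 heven
                  simpa only [Nat.add_sub_cancel] using this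
              have hB : (q j).coeff (j+2-i) =
                  (-1:ℚ)^(i/2-1) / (j.factorial : ℚ) * S n (i/2-1) (j-1) := by
                have heven2 : Even (i-2) := by
                  rcases heven with ⟨c, hc⟩; exact ⟨c-1, by omega⟩
                have := (ih0.2 (i-2) (by omega)).2 heven2
                rw [show j+2-i = j-(i-2) from by omega, this,
                  show (i-2)/2 = i/2-1 from by omega]
              rw [hA, hB, S_succ n (i/2) j hk]
              obtain ⟨k', hk'⟩ : ∃ k', i/2 = k'+1 := ⟨i/2-1, by omega⟩
              have hneg : (-1:ℚ)^(i/2) = -(-1:ℚ)^(i/2-1) := by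
                rw [hk', Nat.add_sub_cancel, pow_succ]; ring
              rw [hfact2, hfact1, hneg]
              have hne : ((j:ℚ)+2) ≠ 0 := by positivity
              have hne1 : ((j:ℚ)+1) ≠ 0 := by positivity
              field_simp
              ring
  exact (key j hjn).2 i hij
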